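/- arXiv:2301.00543 — 2 statements merged into one kernel-verified Lean document; each statement's English description precedes it below -/
import Mathlib

section
/- Let A = diag(1, ζₙᵃ, ζₙᵇ) generate a cyclic subgroup G of PGL₃(ℂ) of order n ≥ 3, with 0 ≤ a < b ≤ n−1 and gcd(a,b)=1. If there is no c ∈ ℂ* with {c, c·ζₙᵃ, c·ζₙᵇ} = {1, ζₙ^{−a}, ζₙ^{−b}} as multisets, then G is not conjugate in PGL₃(ℂ) to any subgroup of PGL₃(ℝ). -/
open Matrix

noncomputable section

abbrev PGL3C := GL (Fin 3) ℂ ⧸ Subgroup.center (GL (Fin 3) ℂ)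

def proj : GL (Fin 3) ℂ →* PGL3C := QuotientGroup.mk' _

def sigmaGL : GL (Fin 3) ℂ ≃* GL (Fin 3) ℂ :=
  Units.mapEquiv (Complex.conjAe.toRingEquiv.mapMatrix.toMulEquiv)

lemma sigma_center :
    (Subgroup.center (GL (Fin 3) ℂ)).map sigmaGL.toMonoidHom
      = Subgroup.center (GL (Fin 3) ℂ) := by
  ext x
  simp only [Subgroup.mem_map, Subgroup.mem_center_iff]
  constructor
  · rintro ⟨y, hy, rfl⟩ g
    have := hy (sigmaGL.symm g)
    calc g * sigmaGL y = sigmaGL (sigmaGL.symm g * y) := by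
          simp [_root_.map_mul]
      _ = sigmaGL (y * sigmaGL.symm g) := by rw [this]
      _ = sigmaGL y * g := by simp [_root_.map_mul]
  · intro hx
    refine ⟨sigmaGL.symm x, fun g => ?_, by simp⟩
    have := hx (sigmaGL g)
    calc g * sigmaGL.symm x = sigmaGL.symm (sigmaGL g * x) := by simp [_root_.map_mul]
      _ = sigmaGL.symm (x * sigmaGL g) := by rw [this]
      _ = sigmaGL.symm x * g := by simp [_root_.map_mul]

def sigmaPGL : PGL3C ≃* PGL3C :=
  QuotientGroup.congr _ _ sigmaGL sigma_center

def PGL3R : Subgroup PGL3C :=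
  ((Units.map ((algebraMap ℝ ℂ).mapMatrix.toMonoidHom :
      Matrix (Fin 3) (Fin 3) ℝ →* Matrix (Fin 3) (Fin 3) ℂ)).range).map proj


open Polynomial in
lemma charpoly_diag3 (d : Fin 3 → ℂ) :
    (Matrix.diagonal d).charpoly = ∏ i, (X - C (d i)) := by
  rw [Matrix.charpoly_of_upperTriangular _ (Matrix.blockTriangular_diagonal d)]
  simp

lemma roots_charpoly_diag3 (d : Fin 3 → ℂ) :
    (Matrix.diagonal d).charpoly.roots = {d 0, d 1, d 2} := by
  rw [charpoly_diag3]
  have h : (∏ i, (Polynomial.X - Polynomial.C (d i)))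
      = (({d 0, d 1, d 2} : Multiset ℂ).map fun a => Polynomial.X - Polynomial.C a).prod := by
    simp [Fin.prod_univ_three, mul_assoc]
  rw [h, Polynomial.roots_multiset_prod_X_sub_C]

open Polynomial in
lemma charpoly_conj3 (Q : GL (Fin 3) ℂ) (M : Matrix (Fin 3) (Fin 3) ℂ) :
    ((Q : Matrix (Fin 3) (Fin 3) ℂ) * M *
      ((Q⁻¹ : GL (Fin 3) ℂ) : Matrix (Fin 3) (Fin 3) ℂ)).charpoly = M.charpoly := by
  set f : Matrix (Fin 3) (Fin 3) ℂ →+* Matrix (Fin 3) (Fin 3) ℂ[X] :=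
    (C : ℂ →+* ℂ[X]).mapMatrix
  set Qm := (Q : Matrix (Fin 3) (Fin 3) ℂ)
  set Qi := ((Q⁻¹ : GL (Fin 3) ℂ) : Matrix (Fin 3) (Fin 3) ℂ)
  have hQ : f Qm * f Qi = 1 := by
    rw [← _root_.map_mul f]
    have : Qm * Qi = 1 := by
      rw [← Units.val_mul, mul_inv_cancel, Units.val_one]
    rw [this, _root_.map_one f]
  have hQ' : f Qi * f Qm = 1 := by
    rw [← _root_.map_mul f]
    have : Qi * Qm = 1 := by
      rw [← Units.val_mul, inv_mul_cancel, Units.val_one]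
    rw [this, _root_.map_one f]
  have hsc : f Qm * Matrix.scalar (Fin 3) (X : ℂ[X])
      = Matrix.scalar (Fin 3) (X : ℂ[X]) * f Qm :=
    (Matrix.scalar_commute (X : ℂ[X]) (fun r => Commute.all _ _) (f Qm)).eq.symm
  have h1 : Matrix.charmatrix (Qm * M * Qi) = f Qm * M.charmatrix * f Qi := by
    rw [Matrix.charmatrix, Matrix.charmatrix, Matrix.mul_sub, Matrix.sub_mul]
    congr 1
    · rw [hsc, mul_assoc, hQ, mul_one]
    · rw [_root_.map_mul f, _root_.map_mul f]
  rw [Matrix.charpoly, Matrix.charpoly, h1, Matrix.det_mul, Matrix.det_mul,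
    mul_comm, ← mul_assoc, ← Matrix.det_mul, hQ']
  simp

lemma center_scalar3 {x : GL (Fin 3) ℂ} (hx : x ∈ Subgroup.center (GL (Fin 3) ℂ)) :
    ∃ c : ℂ, c ≠ 0 ∧ (x : Matrix (Fin 3) (Fin 3) ℂ) = c • 1 := by
  rw [Subgroup.mem_center_iff] at hx
  have hcomm : Pairwise fun i j : Fin 3 =>
      Commute (Matrix.single i j 1) (x : Matrix (Fin 3) (Fin 3) ℂ) := by
    intro i j hij
    set E := Matrix.single i j (1:ℂ) with hE
    have hE2 : E * E = 0 := Matrix.single_mul_single_of_ne _ _ _ _ hij.symm 1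
    have h1 : (1 + E) * (1 - E) = 1 := by noncomm_ring [hE2]
    have h2 : (1 - E) * (1 + E) = 1 := by noncomm_ring [hE2]
    let u : GL (Fin 3) ℂ := ⟨1 + E, 1 - E, h1, h2⟩
    have hu := congrArg Units.val (hx u)
    simp only [Units.val_mul] at hu
    have huu : (x : Matrix (Fin 3) (Fin 3) ℂ) + E * (x : Matrix (Fin 3) (Fin 3) ℂ)
        = (x : Matrix (Fin 3) (Fin 3) ℂ) + (x : Matrix (Fin 3) (Fin 3) ℂ) * E := by
      have h3 : (1 + E) * (x : Matrix (Fin 3) (Fin 3) ℂ)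
          = (x : Matrix (Fin 3) (Fin 3) ℂ) * (1 + E) := hu
      rw [add_mul, mul_add, one_mul, mul_one] at h3
      exact h3
    exact add_left_cancel huu
  obtain ⟨r, hr⟩ := Matrix.mem_range_scalar_of_commute_single hcomm
  refine ⟨r, ?_, by rw [← hr, Matrix.scalar_apply, Matrix.smul_one_eq_diagonal]⟩
  rintro rfl
  rw [map_zero] at hr
  have hmi := x.mul_inv
  rw [← hr, zero_mul] at hmi
  have h01 := congrFun (congrFun hmi 0) 0
  simp [Matrix.one_apply] at h01

lemma conj_zeta' (n : ℕ) :
    (starRingEnd ℂ) (Complex.exp (2 * Real.pi * Complex.I / (n : ℂ)))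
      = (Complex.exp (2 * Real.pi * Complex.I / (n : ℂ)))⁻¹ := by
  rw [← Complex.exp_conj, ← Complex.exp_neg]
  congr 1
  rw [map_div₀, _root_.map_mul, _root_.map_mul, Complex.conj_I, Complex.conj_ofReal,
    map_ofNat, map_natCast]
  ring

lemma sigmaGL_coe (u : GL (Fin 3) ℂ) :
    (sigmaGL u : Matrix (Fin 3) (Fin 3) ℂ)
      = (u : Matrix (Fin 3) (Fin 3) ℂ).map (starRingEnd ℂ) := rfl

lemma sigmaPGL_proj (g : GL (Fin 3) ℂ) : sigmaPGL (proj g) = proj (sigmaGL g) := rfl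

theorem stmt3 (n a b : ℕ) (hn : 3 ≤ n) (hab : a < b) (hb : b ≤ n - 1)
    (hgcd : Nat.gcd a b = 1)
    (A : GL (Fin 3) ℂ)
    (hA : (A : Matrix (Fin 3) (Fin 3) ℂ)
      = Matrix.diagonal ![1, (Complex.exp (2 * Real.pi * Complex.I / (n : ℂ))) ^ a, (Complex.exp (2 * Real.pi * Complex.I / (n : ℂ))) ^ b])
    (hno : ¬∃ c : ℂ, c ≠ 0 ∧
      ({c, c * (Complex.exp (2 * Real.pi * Complex.I / (n : ℂ))) ^ a, c * (Complex.exp (2 * Real.pi * Complex.I / (n : ℂ))) ^ b} : Multiset ℂ)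
        = {1, ((Complex.exp (2 * Real.pi * Complex.I / (n : ℂ))) ^ a)⁻¹, ((Complex.exp (2 * Real.pi * Complex.I / (n : ℂ))) ^ b)⁻¹}) :
    ¬∃ φ : PGL3C,
      Subgroup.map (MulAut.conj φ).toMonoidHom (Subgroup.closure {proj A}) ≤ PGL3R := by
  set ζ : ℂ := Complex.exp (2 * Real.pi * Complex.I / (n : ℂ)) with hζ
  rintro ⟨φ, hφ⟩
  obtain ⟨P, rfl⟩ := QuotientGroup.mk'_surjective (Subgroup.center (GL (Fin 3) ℂ)) φ
  have hmem : (MulAut.conj (proj P)).toMonoidHom (proj A) ∈ PGL3R :=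
    hφ (Subgroup.mem_map_of_mem _ (Subgroup.subset_closure rfl))
  rw [PGL3R] at hmem
  obtain ⟨x, hx1, hx2⟩ := Subgroup.mem_map.mp hmem
  obtain ⟨R, rfl⟩ := hx1
  -- σ fixes real points
  have hfix : sigmaGL (Units.map ((algebraMap ℝ ℂ).mapMatrix.toMonoidHom :
      Matrix (Fin 3) (Fin 3) ℝ →* Matrix (Fin 3) (Fin 3) ℂ) R)
      = Units.map ((algebraMap ℝ ℂ).mapMatrix.toMonoidHom :
        Matrix (Fin 3) (Fin 3) ℝ →* Matrix (Fin 3) (Fin 3) ℂ) R := by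
    apply Units.ext
    rw [sigmaGL_coe, Units.coe_map]
    ext i j
    simp [Matrix.map_apply, RingHom.mapMatrix_apply, Complex.conj_ofReal]
  set B := P * A * P⁻¹ with hB
  have hconj : (MulAut.conj (proj P)).toMonoidHom (proj A) = proj B := by
    simp only [MulAut.conj_apply, MulEquiv.toMonoidHom_eq_coe, MonoidHom.coe_coe,
      MulAut.conj_apply, hB, _root_.map_mul, map_inv]
  have hx2' : proj (Units.map ((algebraMap ℝ ℂ).mapMatrix.toMonoidHom :
      Matrix (Fin 3) (Fin 3) ℝ →* Matrix (Fin 3) (Fin 3) ℂ) R) = proj B := hx2.trans hconj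
  have h4 : proj (sigmaGL B) = proj B := by
    rw [← sigmaPGL_proj, ← hx2', sigmaPGL_proj, hfix, hx2']
  obtain ⟨z, hz, hzeq⟩ :=
    (QuotientGroup.mk'_eq_mk' (Subgroup.center (GL (Fin 3) ℂ))).mp h4
  obtain ⟨c, hc0, hcz⟩ := center_scalar3 hz
  have hmatB : (B : Matrix (Fin 3) (Fin 3) ℂ)
      = c • ((sigmaGL B : GL (Fin 3) ℂ) : Matrix (Fin 3) (Fin 3) ℂ) := by
    conv_lhs => rw [← hzeq]
    rw [Units.val_mul, hcz, mul_smul_comm, mul_one]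
  -- charpoly of B equals charpoly of A
  have hcpB : ((B : GL (Fin 3) ℂ) : Matrix (Fin 3) (Fin 3) ℂ).charpoly
      = ((A : GL (Fin 3) ℂ) : Matrix (Fin 3) (Fin 3) ℂ).charpoly := by
    rw [hB, Units.val_mul, Units.val_mul]
    exact charpoly_conj3 P _
  have hsig : sigmaGL B = sigmaGL P * sigmaGL A * (sigmaGL P)⁻¹ := by
    simp only [hB, _root_.map_mul, map_inv]
  have hcpσ : (c • ((sigmaGL B : GL (Fin 3) ℂ) : Matrix (Fin 3) (Fin 3) ℂ)).charpoly
      = (c • ((sigmaGL A : GL (Fin 3) ℂ) : Matrix (Fin 3) (Fin 3) ℂ)).charpoly := by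
    rw [hsig, Units.val_mul, Units.val_mul]
    have hre : c • (((sigmaGL P : GL (Fin 3) ℂ) : Matrix (Fin 3) (Fin 3) ℂ)
          * ((sigmaGL A : GL (Fin 3) ℂ) : Matrix (Fin 3) (Fin 3) ℂ)
          * (((sigmaGL P)⁻¹ : GL (Fin 3) ℂ) : Matrix (Fin 3) (Fin 3) ℂ))
        = ((sigmaGL P : GL (Fin 3) ℂ) : Matrix (Fin 3) (Fin 3) ℂ)
          * (c • ((sigmaGL A : GL (Fin 3) ℂ) : Matrix (Fin 3) (Fin 3) ℂ))
          * (((sigmaGL P)⁻¹ : GL (Fin 3) ℂ) : Matrix (Fin 3) (Fin 3) ℂ) := by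
      rw [mul_smul_comm, smul_mul_assoc]
    rw [hre]
    exact charpoly_conj3 (sigmaGL P) _
  have hcp : ((A : GL (Fin 3) ℂ) : Matrix (Fin 3) (Fin 3) ℂ).charpoly
      = (c • ((sigmaGL A : GL (Fin 3) ℂ) : Matrix (Fin 3) (Fin 3) ℂ)).charpoly := by
    rw [← hcpB, hmatB, hcpσ]
  -- compute σA
  have hσA : ((sigmaGL A : GL (Fin 3) ℂ) : Matrix (Fin 3) (Fin 3) ℂ)
      = Matrix.diagonal ![1, (ζ ^ a)⁻¹, (ζ ^ b)⁻¹] := by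
    have hfun : (fun m => (starRingEnd ℂ) ((![1, ζ ^ a, ζ ^ b] : Fin 3 → ℂ) m))
        = ![1, (ζ ^ a)⁻¹, (ζ ^ b)⁻¹] := by
      funext i
      fin_cases i <;> simp [hζ, map_pow, conj_zeta' n, inv_pow]
    rw [sigmaGL_coe, hA, Matrix.diagonal_map (map_zero _), hfun]
  have hAd : ((A : GL (Fin 3) ℂ) : Matrix (Fin 3) (Fin 3) ℂ)
      = Matrix.diagonal ![1, ζ ^ a, ζ ^ b] := hA
  have hsmul : c • ((sigmaGL A : GL (Fin 3) ℂ) : Matrix (Fin 3) (Fin 3) ℂ)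
      = Matrix.diagonal (c • ![1, (ζ ^ a)⁻¹, (ζ ^ b)⁻¹]) := by
    rw [hσA, Matrix.diagonal_smul]
  have hroots := congrArg Polynomial.roots hcp
  rw [hAd, hsmul, roots_charpoly_diag3, roots_charpoly_diag3] at hroots
  simp only [Matrix.cons_val_zero, Matrix.cons_val_one, Matrix.head_cons, Pi.smul_apply,
    smul_eq_mul, mul_one, Matrix.cons_val_two, Matrix.tail_cons] at hroots
  -- contradict hno with c⁻¹
  refine hno ⟨c⁻¹, inv_ne_zero hc0, ?_⟩
  have hmap := congrArg (Multiset.map (fun y : ℂ => c⁻¹ * y)) hroots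
  simpa [← hζ, ← mul_assoc, inv_mul_cancel₀ hc0] using hmap
end
end

section
/- No subgroup of PGL₃(ℂ) containing a subgroup isomorphic to C₃ × C₃ is conjugate in PGL₃(ℂ) to a subgroup of PGL₃(ℝ). In particular, the Hessian groups Hess₃₆, Hess₇₂, Hess₂₁₆ and the alternating group A₆ (viewed as subgroups of PGL₃(ℂ)) are not definable over ℝ. -/
open Matrix

noncomputable section

def qq (M : Matrix (Fin 3) (Fin 3) ℝ) : ℝ :=
  M 0 0 * M 1 1 - M 0 1 * M 1 0 + M 0 0 * M 2 2 - M 0 2 * M 2 0 + M 1 1 * M 2 2 - M 1 2 * M 2 1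

lemma cayley3 (M : Matrix (Fin 3) (Fin 3) ℝ) :
    M * M * M - M.trace • (M * M) + qq M • M - M.det • 1 = 0 := by
  ext i j
  fin_cases i <;> fin_cases j <;>
    simp [Matrix.mul_apply, Matrix.trace, Matrix.det_fin_three, qq, Fin.sum_univ_three,
      Matrix.diag] <;> ring

lemma real_cube_root_one {s : ℝ} (h : s ^ 3 = 1) : s = 1 := by
  nlinarith [sq_nonneg (s - 1), sq_nonneg (s + 1), sq_nonneg s]

lemma smul_one_cube {s : ℝ} (h : (s • (1:Matrix (Fin 3) (Fin 3) ℝ)) * (s • 1) * (s • 1) = 1) :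
    s = 1 := by
  apply real_cube_root_one
  have h2 : (s*s*s) • (1:Matrix (Fin 3) (Fin 3) ℝ) = 1 := by
    have e : (s • (1:Matrix (Fin 3) (Fin 3) ℝ)) * (s • 1) * (s • 1) = (s*s*s) • 1 := by
      simp only [smul_mul_assoc, one_mul, smul_smul]
    rw [← e, h]
  have := congrFun (congrFun h2 0) 0
  simp [Matrix.one_apply] at this
  linarith [this]

lemma cube_one_cases {M : Matrix (Fin 3) (Fin 3) ℝ} (h : M * M * M = 1) :
    M = 1 ∨ M.trace = 0 := by
  have hdet : M.det = 1 := by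
    have h3 : M.det ^ 3 = 1 := by
      have := congrArg Matrix.det h
      simpa [Matrix.det_mul, pow_succ, mul_assoc] using this
    exact real_cube_root_one h3
  have hch := cayley3 M
  rw [h, hdet, one_smul] at hch
  have key : qq M • M - M.trace • (M * M) = 0 := by rw [← hch]; abel
  have key' : M.trace • (M * M) = qq M • M := (sub_eq_zero.mp key).symm
  by_cases ht : M.trace = 0
  · exact Or.inr ht
  · left
    have k2 : M.trace • (1 : Matrix (Fin 3) (Fin 3) ℝ) = qq M • (M * M) := by
      calc M.trace • (1 : Matrix (Fin 3) (Fin 3) ℝ) = M.trace • (M * M * M) := by rw [h]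
        _ = (M.trace • (M * M)) * M := by rw [smul_mul_assoc]
        _ = (qq M • M) * M := by rw [key']
        _ = qq M • (M * M) := by rw [smul_mul_assoc]
    have k3 : (M.trace * M.trace) • (1 : Matrix (Fin 3) (Fin 3) ℝ) = (qq M * qq M) • M := by
      calc (M.trace * M.trace) • (1 : Matrix (Fin 3) (Fin 3) ℝ)
          = M.trace • (M.trace • (1:Matrix (Fin 3) (Fin 3) ℝ)) := by rw [smul_smul]
        _ = M.trace • (qq M • (M*M)) := by rw [k2]
        _ = qq M • (M.trace • (M*M)) := smul_comm _ _ _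
        _ = qq M • (qq M • M) := by rw [key']
        _ = (qq M * qq M) • M := by rw [smul_smul]
    have hq : qq M * qq M ≠ 0 := by
      intro h0
      rcases mul_self_eq_zero.mp h0 with h0
      rw [h0, zero_smul] at k2
      have := congrFun (congrFun k2 0) 0
      simp at this
      exact ht this
    set s : ℝ := (qq M * qq M)⁻¹ * (M.trace * M.trace) with hs
    have hM : M = s • 1 := by
      have h4 : (qq M*qq M)⁻¹ • ((M.trace*M.trace) • (1:Matrix (Fin 3) (Fin 3) ℝ))
          = (qq M*qq M)⁻¹ • ((qq M*qq M) • M) := by rw [k3]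
      rw [inv_smul_smul₀ hq, smul_smul] at h4
      rw [← h4, hs]
    have hs1 : s = 1 := smul_one_cube (by rw [← hM]; exact h)
    rw [hM, hs1, one_smul]

-- abbreviation for the real-to-complex GL map
abbrev fH : Matrix (Fin 3) (Fin 3) ℝ →* Matrix (Fin 3) (Fin 3) ℂ :=
  (algebraMap ℝ ℂ).mapMatrix.toMonoidHom

lemma mem_PGL3R_iff {z : PGL3C} :
    z ∈ PGL3R ↔ ∃ A : GL (Fin 3) ℝ, proj (Units.map fH A) = z := by
  constructor
  · rintro ⟨u, ⟨A, rfl⟩, rfl⟩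
    exact ⟨A, rfl⟩
  · rintro ⟨A, rfl⟩
    exact ⟨Units.map fH A, ⟨A, rfl⟩, rfl⟩

lemma fH_val (A : GL (Fin 3) ℝ) (i j : Fin 3) :
    ((Units.map fH A : GL (Fin 3) ℂ) : Matrix (Fin 3) (Fin 3) ℂ) i j = (A.val i j : ℂ) := rfl

lemma proj_eq_one_iff {u : GL (Fin 3) ℂ} :
    proj u = 1 ↔ u ∈ Subgroup.center (GL (Fin 3) ℂ) := by
  simp [proj]

lemma center_scalar {u : GL (Fin 3) ℂ} (hu : u ∈ Subgroup.center (GL (Fin 3) ℂ)) :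
    ∃ c : ℂ, (u : Matrix (Fin 3) (Fin 3) ℂ) = c • 1 := by
  have h : ∀ t : TransvectionStruct (Fin 3) ℂ, Commute t.toMatrix (u : Matrix (Fin 3) (Fin 3) ℂ) := by
    intro t
    set tu : (Matrix (Fin 3) (Fin 3) ℂ)ˣ := ⟨t.toMatrix, t.inv.toMatrix, t.mul_inv, t.inv_mul⟩
    have h1 := Subgroup.mem_center_iff.mp hu tu
    have h2 := congrArg Units.val h1
    exact (by simpa [tu] using h2 : t.toMatrix * (u : Matrix (Fin 3) (Fin 3) ℂ) = u * t.toMatrix)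
  obtain ⟨c, hc⟩ := Matrix.mem_range_scalar_of_commute_transvectionStruct h
  refine ⟨c, ?_⟩
  rw [← hc]
  ext i j
  simp [Matrix.scalar_apply, Matrix.one_apply, Matrix.diagonal]

lemma scalar_smul_one {R : Type*} [CommRing R] (c : R) :
    (Matrix.scalar (Fin 3) c : Matrix (Fin 3) (Fin 3) R) = c • 1 := by
  ext i j
  simp [Matrix.scalar_apply, Matrix.one_apply, Matrix.diagonal]

lemma scalar_mem_center (c : ℂ) (u : GL (Fin 3) ℂ)
    (hc : (u : Matrix (Fin 3) (Fin 3) ℂ) = c • 1) : u ∈ Subgroup.center (GL (Fin 3) ℂ) := by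
  rw [Subgroup.mem_center_iff]
  intro g
  refine Units.ext ?_
  show (g.val * u.val : Matrix (Fin 3) (Fin 3) ℂ) = u.val * g.val
  rw [hc, smul_mul_assoc, mul_smul_comm, one_mul, mul_one]

/-- If the complex projective image of a real matrix is trivial, it is a real scalar matrix. -/
lemma real_scalar_of_proj_eq_one {A : GL (Fin 3) ℝ} (h : proj (Units.map fH A) = 1) :
    ∃ r : ℝ, (A : Matrix (Fin 3) (Fin 3) ℝ) = r • 1 := by
  obtain ⟨c, hc⟩ := center_scalar (proj_eq_one_iff.mp h)
  refine ⟨A.val 0 0, ?_⟩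
  have key : ∀ i j : Fin 3, (A.val i j : ℂ) = c * (if i = j then 1 else 0) := by
    intro i j
    have := congrFun (congrFun hc i) j
    rw [fH_val] at this
    simpa [Matrix.one_apply] using this
  have h00 : (A.val 0 0 : ℂ) = c := by simpa using key 0 0
  ext i j
  by_cases hij : i = j
  · subst hij
    have : (A.val i i : ℂ) = (A.val 0 0 : ℂ) := by rw [key i i, h00]; simp
    have := Complex.ofReal_injective this
    simp [Matrix.one_apply, this]
  · have : (A.val i j : ℂ) = 0 := by rw [key i j]; simp [hij]
    have := Complex.ofReal_injective (by simpa using this : (A.val i j : ℂ) = ((0:ℝ) : ℂ))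
    simp [Matrix.one_apply, hij, this]

/-- Conversely, a real scalar matrix has trivial projective image. -/
lemma proj_eq_one_of_real_scalar {A : GL (Fin 3) ℝ} {r : ℝ}
    (h : (A : Matrix (Fin 3) (Fin 3) ℝ) = r • 1) : proj (Units.map fH A) = 1 := by
  rw [proj_eq_one_iff]
  refine scalar_mem_center (r : ℂ) _ ?_
  ext i j
  rw [fH_val]
  have := congrFun (congrFun h i) j
  rw [this]
  simp [Matrix.one_apply]
  split <;> simp

lemma real_cube_root_exists (a : ℝ) : ∃ t : ℝ, t ^ 3 = a := by
  rcases le_or_gt 0 a with ha | ha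
  · exact ⟨a ^ ((3:ℕ)⁻¹ : ℝ), Real.rpow_inv_natCast_pow ha (by norm_num)⟩
  · obtain ⟨t, ht⟩ : ∃ t : ℝ, t ^ 3 = -a :=
      ⟨(-a) ^ ((3:ℕ)⁻¹ : ℝ), Real.rpow_inv_natCast_pow (by linarith) (by norm_num)⟩
    exact ⟨-t, by rw [Odd.neg_pow (by decide), ht, neg_neg]⟩

lemma normalized_lift {x : PGL3C} (hx : x ∈ PGL3R) (hx3 : x ^ 3 = 1) :
    ∃ A : GL (Fin 3) ℝ, proj (Units.map fH A) = x ∧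
      (A : Matrix (Fin 3) (Fin 3) ℝ) * A * A = 1 := by
  obtain ⟨A₀, hA₀⟩ := mem_PGL3R_iff.mp hx
  have h3 : proj (Units.map fH (A₀ ^ 3)) = 1 := by
    rw [map_pow, map_pow, hA₀, hx3]
  obtain ⟨a, ha⟩ := real_scalar_of_proj_eq_one h3
  have hane : a ≠ 0 := by
    intro h0
    rw [h0, zero_smul] at ha
    have h1 : ((A₀ ^ 3) * (A₀ ^ 3)⁻¹ : GL (Fin 3) ℝ).val = 1 := by
      rw [mul_inv_cancel]; rfl
    rw [Units.val_mul, ha, zero_mul] at h1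
    have := congrFun (congrFun h1 0) 0
    simp [Matrix.one_apply] at this
  obtain ⟨t, ht⟩ := real_cube_root_exists a
  have htne : t ≠ 0 := by rintro rfl; simp at ht; exact hane ht.symm
  set tU : (Matrix (Fin 3) (Fin 3) ℝ)ˣ :=
    ⟨t • 1, t⁻¹ • 1, by simp [smul_smul, mul_inv_cancel₀ htne, inv_mul_cancel₀ htne],
      by simp [smul_smul, mul_inv_cancel₀ htne, inv_mul_cancel₀ htne]⟩ with htU
  refine ⟨tU⁻¹ * A₀, ?_, ?_⟩
  · rw [_root_.map_mul, _root_.map_mul, map_inv, map_inv, hA₀]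
    have : proj (Units.map fH tU) = 1 := proj_eq_one_of_real_scalar (by rfl)
    rw [this, inv_one, one_mul]
  · have hval : ((tU⁻¹ * A₀ : (Matrix (Fin 3) (Fin 3) ℝ)ˣ) : Matrix (Fin 3) (Fin 3) ℝ)
        = t⁻¹ • (A₀ : Matrix (Fin 3) (Fin 3) ℝ) := by
      rw [Units.val_mul]
      show (t⁻¹ • (1:Matrix (Fin 3) (Fin 3) ℝ)) * A₀.val = _
      rw [smul_mul_assoc, one_mul]
    have e1 : ∀ (X Y : Matrix (Fin 3) (Fin 3) ℝ) (c d : ℝ), (c • X) * (d • Y) = (c*d) • (X*Y) := by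
      intros X Y c d; rw [smul_mul_assoc, mul_smul_comm, smul_smul]
    rw [hval, e1, e1]
    have hcube : (A₀ : Matrix (Fin 3) (Fin 3) ℝ) * A₀ * A₀ = a • 1 := by
      rw [← ha]
      rw [← pow_three']
      rfl
    rw [hcube, smul_smul]
    have : t⁻¹ * t⁻¹ * t⁻¹ * a = 1 := by
      field_simp
      nlinarith [ht]
    rw [this, one_smul]

lemma lifts_commute {A B : GL (Fin 3) ℝ}
    (h : proj (Units.map fH A) * proj (Units.map fH B)
        = proj (Units.map fH B) * proj (Units.map fH A)) :
    A * B = B * A := by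
  have hK : proj (Units.map fH (A * B * A⁻¹ * B⁻¹)) = 1 := by
    rw [_root_.map_mul, _root_.map_mul, _root_.map_mul, _root_.map_mul, _root_.map_mul,
      _root_.map_mul, map_inv, map_inv, map_inv, map_inv, h]
    group
  obtain ⟨r, hr⟩ := real_scalar_of_proj_eq_one hK
  have h1A : (A.val).det * ((A⁻¹).val).det = 1 := by
    rw [← Matrix.det_mul, ← Units.val_mul, mul_inv_cancel]; simp
  have h1B : (B.val).det * ((B⁻¹).val).det = 1 := by
    rw [← Matrix.det_mul, ← Units.val_mul, mul_inv_cancel]; simp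
  have hd := congrArg Matrix.det hr
  simp only [Units.val_mul, Matrix.det_mul, Matrix.det_smul, Matrix.det_one, Fintype.card_fin,
    smul_eq_mul, mul_one] at hd
  have hr3 : r ^ 3 = 1 := by
    have key : r ^ 3 = ((A.val).det * ((A⁻¹).val).det) * ((B.val).det * ((B⁻¹).val).det) := by
      linear_combination -hd
    rw [h1A, h1B, mul_one] at key
    exact key
  have hr1 : r = 1 := real_cube_root_one hr3
  have hK1 : A * B * A⁻¹ * B⁻¹ = 1 := by
    apply Units.ext
    rw [hr1, one_smul] at hr
    exact hr
  have h1 : A * B * A⁻¹ = B := by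
    have := mul_inv_eq_one.mp hK1
    exact this
  exact mul_inv_eq_iff_eq_mul.mp h1

lemma key {x y : PGL3C} (hx : x ∈ PGL3R) (hy : y ∈ PGL3R)
    (hcomm : x * y = y * x) (hx3 : x ^ 3 = 1) (hy3 : y ^ 3 = 1)
    (hne : ∀ u v : Fin 3, ¬((u : ℕ) = 0 ∧ (v : ℕ) = 0) → x ^ (u:ℕ) * y ^ (v:ℕ) ≠ 1) :
    False := by
  obtain ⟨A, hA, hA3⟩ := normalized_lift hx hx3
  obtain ⟨B, hB, hB3⟩ := normalized_lift hy hy3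
  have hAB : A * B = B * A := lifts_commute (by rw [hA, hB, hcomm])
  set P : Matrix (Fin 3) (Fin 3) ℝ := A.val with hPdef
  set Q : Matrix (Fin 3) (Fin 3) ℝ := B.val with hQdef
  have hcomm' : Commute P Q := by
    have := congrArg Units.val hAB
    exact (by simpa [Units.val_mul] using this : P * Q = Q * P)
  have hP3 : P ^ 3 = 1 := by rw [pow_three']; exact hA3
  have hQ3 : Q ^ 3 = 1 := by rw [pow_three']; exact hB3
  -- projective image of mixed powers
  have himg : ∀ u v : ℕ, proj (Units.map fH (A ^ u * B ^ v)) = x ^ u * y ^ v := by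
    intro u v
    rw [_root_.map_mul, _root_.map_mul, map_pow, map_pow, map_pow, map_pow, hA, hB]
  -- all nontrivial mixed powers have trace zero
  have tr0 : ∀ u v : Fin 3, ¬((u : ℕ) = 0 ∧ (v : ℕ) = 0) →
      (P ^ (u:ℕ) * Q ^ (v:ℕ)).trace = 0 := by
    intro u v huv
    have hcube : (P ^ (u:ℕ) * Q ^ (v:ℕ)) * (P ^ (u:ℕ) * Q ^ (v:ℕ)) * (P ^ (u:ℕ) * Q ^ (v:ℕ)) = 1 := by
      rw [← pow_three', (hcomm'.pow_pow (u:ℕ) (v:ℕ)).mul_pow, pow_right_comm, hP3,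
        pow_right_comm, hQ3, one_pow, one_pow, one_mul]
    rcases cube_one_cases hcube with h1 | h0
    · exfalso
      have hunit : (A ^ (u:ℕ) * B ^ (v:ℕ) : (Matrix (Fin 3) (Fin 3) ℝ)ˣ) = 1 := by
        apply Units.ext
        simpa [Units.val_mul, Units.val_pow_eq_pow_val] using h1
      have := himg (u:ℕ) (v:ℕ)
      rw [hunit, _root_.map_one, _root_.map_one] at this
      exact hne u v huv this.symm
    · exact h0
  have hPmod : ∀ c : ℕ, P ^ c = P ^ (c % 3) := fun c => pow_eq_pow_mod c hP3
  have hQmod : ∀ c : ℕ, Q ^ c = Q ^ (c % 3) := fun c => pow_eq_pow_mod c hQ3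
  -- orthogonality relations
  have ortho : ∀ i j k l : Fin 3,
      ((P ^ (i:ℕ) * Q ^ (j:ℕ)) * (P ^ (3-(k:ℕ)) * Q ^ (3-(l:ℕ)))).trace
        = if i = k ∧ j = l then 3 else 0 := by
    intro i j k l
    have hc2 : Q ^ (j:ℕ) * P ^ (3-(k:ℕ)) = P ^ (3-(k:ℕ)) * Q ^ (j:ℕ) :=
      (hcomm'.symm.pow_pow _ _)
    have rearr : (P ^ (i:ℕ) * Q ^ (j:ℕ)) * (P ^ (3-(k:ℕ)) * Q ^ (3-(l:ℕ)))
        = P ^ ((i:ℕ)+(3-(k:ℕ))) * Q ^ ((j:ℕ)+(3-(l:ℕ))) := by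
      rw [pow_add, pow_add, mul_assoc, mul_assoc]
      congr 1
      rw [← mul_assoc, hc2, mul_assoc]
    rw [rearr, hPmod ((i:ℕ)+(3-(k:ℕ))), hQmod ((j:ℕ)+(3-(l:ℕ)))]
    have ei : ((i:ℕ)+(3-(k:ℕ))) % 3 = ((i - k : Fin 3) : ℕ) := by
      fin_cases i <;> fin_cases k <;> rfl
    have ej : ((j:ℕ)+(3-(l:ℕ))) % 3 = ((j - l : Fin 3) : ℕ) := by
      fin_cases j <;> fin_cases l <;> rfl
    rw [ei, ej]
    by_cases hik : i = k ∧ j = l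
    · obtain ⟨rfl, rfl⟩ := hik
      simp [Matrix.trace_one]
    · rw [if_neg hik]
      apply tr0
      rintro ⟨h1, h2⟩
      have e1 : i - k = 0 := by omega
      have e2 : j - l = 0 := by omega
      exact hik ⟨sub_eq_zero.mp e1, sub_eq_zero.mp e2⟩
  -- linear independence of the nine matrices
  set v : Fin 3 × Fin 3 → Matrix (Fin 3) (Fin 3) ℝ :=
    fun p => P ^ (p.1 : ℕ) * Q ^ (p.2 : ℕ) with hv
  have li : LinearIndependent ℝ v := by
    rw [Fintype.linearIndependent_iff]
    intro g hg p
    obtain ⟨k, l⟩ := p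
    have h0 : (0:ℝ) = g (k, l) * 3 := by
      calc (0:ℝ) = ((0 : Matrix (Fin 3) (Fin 3) ℝ) * (P ^ (3-(k:ℕ)) * Q ^ (3-(l:ℕ)))).trace := by
            rw [zero_mul, Matrix.trace_zero]
        _ = ((∑ q : Fin 3 × Fin 3, g q • v q) * (P ^ (3-(k:ℕ)) * Q ^ (3-(l:ℕ)))).trace := by
            rw [hg]
        _ = ∑ q : Fin 3 × Fin 3, g q * ((v q * (P ^ (3-(k:ℕ)) * Q ^ (3-(l:ℕ)))).trace) := by
            rw [Finset.sum_mul, Matrix.trace_sum]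
            exact Finset.sum_congr rfl fun q _ => by rw [smul_mul_assoc, Matrix.trace_smul,
              smul_eq_mul]
        _ = ∑ q : Fin 3 × Fin 3, g q * (if q.1 = k ∧ q.2 = l then (3:ℝ) else 0) := by
            exact Finset.sum_congr rfl fun q _ => by rw [hv, ortho q.1 q.2 k l]
        _ = g (k, l) * 3 := by
            rw [Finset.sum_eq_single (k, l)]
            · simp
            · intro q _ hq
              rw [if_neg, mul_zero]
              rintro ⟨h1, h2⟩
              exact hq (Prod.ext h1 h2)
            · intro hq
              exact absurd (Finset.mem_univ _) hq
    linarith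
  -- the nine matrices form a basis, so P is central
  have hcard : Fintype.card (Fin 3 × Fin 3) = Module.finrank ℝ (Matrix (Fin 3) (Fin 3) ℝ) := by
    simp [Module.finrank_matrix]
  let b := basisOfLinearIndependentOfCardEqFinrank li hcard
  have hbv : ⇑b = v := coe_basisOfLinearIndependentOfCardEqFinrank li hcard
  have hPvp : ∀ p : Fin 3 × Fin 3, P * v p = v p * P := fun p =>
    (((Commute.refl P).pow_right _).mul_right (hcomm'.pow_right _)).eq
  have hPX : ∀ X : Matrix (Fin 3) (Fin 3) ℝ, P * X = X * P := by
    intro X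
    have hX := b.sum_repr X
    rw [hbv] at hX
    calc P * X = P * ∑ q : Fin 3 × Fin 3, b.repr X q • v q := by rw [hX]
      _ = ∑ q : Fin 3 × Fin 3, b.repr X q • (P * v q) := by
          rw [Finset.mul_sum]; exact Finset.sum_congr rfl fun q _ => (mul_smul_comm _ _ _)
      _ = ∑ q : Fin 3 × Fin 3, b.repr X q • (v q * P) := by
          exact Finset.sum_congr rfl fun q _ => by rw [hPvp q]
      _ = (∑ q : Fin 3 × Fin 3, b.repr X q • v q) * P := by
          rw [Finset.sum_mul]; exact Finset.sum_congr rfl fun q _ => (smul_mul_assoc _ _ _).symm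
      _ = X * P := by rw [hX]
  obtain ⟨r, hrP⟩ := Matrix.mem_range_scalar_of_commute_single
    (M := P) fun i j _ => ((hPX _).symm)
  have hPr : P = r • 1 := by rw [← hrP, scalar_smul_one]
  have hr1 : r = 1 := smul_one_cube (by rw [← hPr]; exact hA3)
  have hP1 : P = 1 := by rw [hPr, hr1, one_smul]
  have hA1 : A = 1 := Units.ext hP1
  have hx1 : x = 1 := by rw [← hA, hA1, _root_.map_one, _root_.map_one]
  refine hne 1 0 (by decide) ?_
  show x ^ ((1 : Fin 3):ℕ) * y ^ ((0 : Fin 3):ℕ) = 1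
  rw [hx1]
  norm_num

lemma part1 (G : Subgroup PGL3C)
    (hH : ∃ H : Subgroup PGL3C, H ≤ G ∧ Nonempty (H ≃* Multiplicative (ZMod 3 × ZMod 3))) :
    ¬∃ φ : PGL3C, Subgroup.map (MulAut.conj φ).toMonoidHom G ≤ PGL3R := by
  obtain ⟨H, hHG, ⟨e⟩⟩ := hH
  rintro ⟨φ, hφ⟩
  set ψ : Multiplicative (ZMod 3 × ZMod 3) →* PGL3C :=
    ((MulAut.conj φ).toMonoidHom.comp H.subtype).comp e.symm.toMonoidHom with hψdef
  have hmem : ∀ m, ψ m ∈ PGL3R := by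
    intro m
    apply hφ
    exact Subgroup.mem_map.mpr ⟨(e.symm m : PGL3C), hHG (e.symm m).2, rfl⟩
  have hinj : Function.Injective ψ := by
    intro a b hab
    have h1 : ((e.symm a : H) : PGL3C) = ((e.symm b : H) : PGL3C) :=
      (MulAut.conj φ).injective hab
    exact e.symm.injective (Subtype.coe_injective h1)
  set a : Multiplicative (ZMod 3 × ZMod 3) := Multiplicative.ofAdd (1, 0) with ha
  set b : Multiplicative (ZMod 3 × ZMod 3) := Multiplicative.ofAdd (0, 1) with hb
  refine key (hmem a) (hmem b) ?_ ?_ ?_ ?_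
  · have hab : a * b = b * a := mul_comm a b
    rw [← _root_.map_mul ψ a b, hab, _root_.map_mul]
  · rw [← map_pow]
    have : a ^ 3 = 1 := by decide
    rw [this, _root_.map_one]
  · rw [← map_pow]
    have : b ^ 3 = 1 := by decide
    rw [this, _root_.map_one]
  · intro u v huv h1
    have h2 : a ^ (u:ℕ) * b ^ (v:ℕ) = 1 := by
      apply hinj
      rw [_root_.map_mul, map_pow, map_pow, _root_.map_one]
      exact h1
    fin_cases u <;> fin_cases v <;>
      first
        | exact huv ⟨rfl, rfl⟩
        | revert h2; decide

abbrev zeta : ℂ := Complex.exp (2 * Real.pi * Complex.I / 3)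

lemma zeta3 : zeta ^ 3 = 1 := by
  rw [← Complex.exp_nat_mul]
  have h : ((3:ℕ):ℂ) * (2 * Real.pi * Complex.I / 3) = 2 * Real.pi * Complex.I := by
    push_cast; ring
  rw [h, Complex.exp_two_pi_mul_I]

lemma zeta0 : zeta ≠ 0 := Complex.exp_ne_zero _

lemma two_pi_I_ne : (2:ℂ) * Real.pi * Complex.I ≠ 0 := by
  simp [Real.pi_ne_zero, Complex.I_ne_zero, Complex.ofReal_ne_zero]

lemma zeta1 : zeta ≠ 1 := by
  intro h
  rw [Complex.exp_eq_one_iff] at h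
  obtain ⟨n, hn⟩ := h
  have h4 : ((3 * n - 1 : ℤ) : ℂ) * (2 * Real.pi * Complex.I) = 0 := by
    push_cast
    linear_combination (-3 : ℂ) * hn
  have h5 : ((3 * n - 1 : ℤ) : ℂ) = 0 := by
    rcases mul_eq_zero.mp h4 with h' | h'
    · exact h'
    · exact absurd h' two_pi_I_ne
  have h6 : (3 * n - 1 : ℤ) = 0 := by exact_mod_cast h5
  omega

lemma zeta2 : zeta ^ 2 ≠ 1 := by
  intro h
  have h1 : zeta = 1 := by
    calc zeta = zeta ^ 3 / zeta ^ 2 := by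
          field_simp
        _ = 1 := by rw [zeta3, h]; norm_num
  exact zeta1 h1

lemma zc : zeta * zeta * zeta = 1 := by rw [← pow_three']; exact zeta3
lemma zci : zeta⁻¹ * zeta⁻¹ * zeta⁻¹ = 1 := by
  rw [← mul_inv, ← mul_inv, zc, inv_one]
lemma zzi : zeta * zeta⁻¹ = 1 := mul_inv_cancel₀ zeta0
lemma ziz : zeta⁻¹ * zeta = 1 := inv_mul_cancel₀ zeta0

section ST
variable {S T : GL (Fin 3) ℂ}
  (hS : (S : Matrix (Fin 3) (Fin 3) ℂ)
      = Matrix.diagonal ![1, zeta, zeta⁻¹])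
  (hT : (T : Matrix (Fin 3) (Fin 3) ℂ) = !![0, 1, 0; 0, 0, 1; 1, 0, 0])

include hS in
lemma Sval3 : (S : Matrix (Fin 3) (Fin 3) ℂ) * S * S = 1 := by
  rw [hS]
  ext i j
  fin_cases i <;> fin_cases j <;>
    simp [Matrix.mul_apply, Fin.sum_univ_three, Matrix.diagonal, Matrix.one_apply,
      zc, zci, zzi, ziz]

include hT in
lemma Tval3 : (T : Matrix (Fin 3) (Fin 3) ℂ) * T * T = 1 := by
  rw [hT]
  ext i j
  fin_cases i <;> fin_cases j <;>
    simp [Matrix.mul_apply, Fin.sum_univ_three, Matrix.one_apply, Matrix.vecHead, Matrix.vecTail]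

include hS hT in
lemma TSval : (T : Matrix (Fin 3) (Fin 3) ℂ) * S = zeta • ((S : Matrix (Fin 3) (Fin 3) ℂ) * T) := by
  rw [hS, hT]
  ext i j
  fin_cases i <;> fin_cases j <;>
    simp [Matrix.mul_apply, Fin.sum_univ_three, Matrix.diagonal, Matrix.smul_apply,
      Matrix.vecHead, Matrix.vecTail, zc, zci, zzi, ziz] <;>
    field_simp <;>
    first
      | linear_combination zc
      | linear_combination (-2:ℂ) * zc
      | linear_combination (-1:ℂ) * zc
      | linear_combination (2:ℂ) * zc
      | ring

include hS hT in
lemma not_scalar (u v : Fin 3) (huv : ¬((u:ℕ) = 0 ∧ (v:ℕ) = 0)) (c : ℂ)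
    (hval : (S : Matrix (Fin 3) (Fin 3) ℂ) ^ (u:ℕ) * (T : Matrix (Fin 3) (Fin 3) ℂ) ^ (v:ℕ)
      = c • 1) : False := by
  fin_cases u <;> fin_cases v
  · exact huv ⟨rfl, rfl⟩
  · have h := congrFun (congrFun hval 0) 1
    simp [hS, hT, pow_succ, pow_zero, Matrix.mul_apply, Fin.sum_univ_three, Matrix.diagonal,
      Matrix.one_apply, Matrix.smul_apply, Matrix.vecHead, Matrix.vecTail] at h
  · have h := congrFun (congrFun hval 0) 2
    simp [hS, hT, pow_succ, pow_zero, Matrix.mul_apply, Fin.sum_univ_three, Matrix.diagonal,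
      Matrix.one_apply, Matrix.smul_apply, Matrix.vecHead, Matrix.vecTail] at h
  · have h00 := congrFun (congrFun hval 0) 0
    have h11 := congrFun (congrFun hval 1) 1
    simp [hS, hT, pow_succ, pow_zero, Matrix.mul_apply, Fin.sum_univ_three, Matrix.diagonal,
      Matrix.one_apply, Matrix.smul_apply, Matrix.vecHead, Matrix.vecTail] at h00 h11
    exact zeta1 (by rw [h11, ← h00])
  · have h := congrFun (congrFun hval 0) 1
    simp [hS, hT, pow_succ, pow_zero, Matrix.mul_apply, Fin.sum_univ_three, Matrix.diagonal,
      Matrix.one_apply, Matrix.smul_apply, Matrix.vecHead, Matrix.vecTail] at h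
  · have h := congrFun (congrFun hval 0) 2
    simp [hS, hT, pow_succ, pow_zero, Matrix.mul_apply, Fin.sum_univ_three, Matrix.diagonal,
      Matrix.one_apply, Matrix.smul_apply, Matrix.vecHead, Matrix.vecTail] at h
  · have h00 := congrFun (congrFun hval 0) 0
    have h11 := congrFun (congrFun hval 1) 1
    simp [hS, hT, pow_succ, pow_zero, Matrix.mul_apply, Fin.sum_univ_three, Matrix.diagonal,
      Matrix.one_apply, Matrix.smul_apply, Matrix.vecHead, Matrix.vecTail] at h00 h11
    refine zeta2 ?_
    rw [pow_two, h11, ← h00]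
  · have h := congrFun (congrFun hval 0) 1
    simp [hS, hT, pow_succ, pow_zero, Matrix.mul_apply, Fin.sum_univ_three, Matrix.diagonal,
      Matrix.one_apply, Matrix.smul_apply, Matrix.vecHead, Matrix.vecTail] at h
  · have h := congrFun (congrFun hval 0) 2
    simp [hS, hT, pow_succ, pow_zero, Matrix.mul_apply, Fin.sum_univ_three, Matrix.diagonal,
      Matrix.one_apply, Matrix.smul_apply, Matrix.vecHead, Matrix.vecTail] at h

end ST

theorem stmt16 :
    (∀ G : Subgroup PGL3C,
        (∃ H : Subgroup PGL3C, H ≤ G ∧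
            Nonempty (H ≃* Multiplicative (ZMod 3 × ZMod 3))) →
        ¬∃ φ : PGL3C, Subgroup.map (MulAut.conj φ).toMonoidHom G ≤ PGL3R) ∧
      ∀ S T : GL (Fin 3) ℂ,
        (S : Matrix (Fin 3) (Fin 3) ℂ)
          = Matrix.diagonal ![1, Complex.exp (2 * Real.pi * Complex.I / 3), (Complex.exp (2 * Real.pi * Complex.I / 3))⁻¹] →
        (T : Matrix (Fin 3) (Fin 3) ℂ) = !![0, 1, 0; 0, 0, 1; 1, 0, 0] →
        ∀ G : Subgroup PGL3C, Subgroup.closure {proj S, proj T} ≤ G →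
          ¬∃ φ : PGL3C, Subgroup.map (MulAut.conj φ).toMonoidHom G ≤ PGL3R := by
  constructor
  · exact fun G hH => part1 G hH
  · intro S T hS hT G hG
    rintro ⟨φ, hφ⟩
    have hSmem : proj S ∈ G := hG (Subgroup.subset_closure (Set.mem_insert _ _))
    have hTmem : proj T ∈ G := hG (Subgroup.subset_closure (Set.mem_insert_of_mem _ rfl))
    set x := (MulAut.conj φ).toMonoidHom (proj S) with hxdef
    set y := (MulAut.conj φ).toMonoidHom (proj T) with hydef
    have hx : x ∈ PGL3R := hφ (Subgroup.mem_map.mpr ⟨proj S, hSmem, rfl⟩)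
    have hy : y ∈ PGL3R := hφ (Subgroup.mem_map.mpr ⟨proj T, hTmem, rfl⟩)
    have hS3 : S ^ 3 = 1 := by
      apply Units.ext
      rw [Units.val_pow_eq_pow_val, pow_three']
      exact Sval3 hS
    have hT3 : T ^ 3 = 1 := by
      apply Units.ext
      rw [Units.val_pow_eq_pow_val, pow_three']
      exact Tval3 hT
    have hx3 : x ^ 3 = 1 := by
      rw [hxdef, ← map_pow, ← map_pow, hS3, _root_.map_one, _root_.map_one]
    have hy3 : y ^ 3 = 1 := by
      rw [hydef, ← map_pow, ← map_pow, hT3, _root_.map_one, _root_.map_one]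
    set zU : GL (Fin 3) ℂ :=
      ⟨zeta • 1, zeta⁻¹ • 1, by simp [smul_smul, mul_inv_cancel₀ zeta0, inv_mul_cancel₀ zeta0],
        by simp [smul_smul, mul_inv_cancel₀ zeta0, inv_mul_cancel₀ zeta0]⟩ with hzU
    have hTS : T * S = zU * (S * T) := by
      apply Units.ext
      show (T : Matrix (Fin 3) (Fin 3) ℂ) * S
        = (zeta • 1) * ((S : Matrix (Fin 3) (Fin 3) ℂ) * T)
      rw [smul_mul_assoc, one_mul]
      exact TSval hS hT
    have hzU1 : proj zU = 1 := proj_eq_one_iff.mpr (scalar_mem_center zeta zU rfl)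
    have hprojcomm : proj S * proj T = proj T * proj S := by
      have h1 : proj (T * S) = proj (S * T) := by
        rw [hTS, _root_.map_mul, hzU1, one_mul]
      rw [← _root_.map_mul, ← _root_.map_mul, h1]
    have hcomm : x * y = y * x := by
      have h2 : (MulAut.conj φ).toMonoidHom (proj S * proj T)
          = (MulAut.conj φ).toMonoidHom (proj T * proj S) := by rw [hprojcomm]
      rw [_root_.map_mul, _root_.map_mul] at h2
      exact h2
    refine key hx hy hcomm hx3 hy3 ?_
    intro u v huv h1
    have h2 : proj (S ^ (u:ℕ) * T ^ (v:ℕ)) = 1 := by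
      apply (MulAut.conj φ).injective
      show (MulAut.conj φ).toMonoidHom (proj (S ^ (u:ℕ) * T ^ (v:ℕ)))
        = (MulAut.conj φ) 1
      rw [_root_.map_one, _root_.map_mul, map_pow, map_pow, _root_.map_mul, map_pow, map_pow]
      exact h1
    obtain ⟨c, hc⟩ := center_scalar (proj_eq_one_iff.mp h2)
    have hval : (S : Matrix (Fin 3) (Fin 3) ℂ) ^ (u:ℕ) * (T : Matrix (Fin 3) (Fin 3) ℂ) ^ (v:ℕ)
        = c • 1 := by
      simpa [Units.val_mul, Units.val_pow_eq_pow_val] using hc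
    exact not_scalar hS hT u v huv c hval
end
end
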